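/- Let s ≥ 0 be an integer and let (a_n)_{n≥0} be a sequence of rational numbers for which there exist a real number Δ > 1 and positive integers δ_n with δ_n ≤ Δ^{n+1} and δ_n·a_n ∈ ℤ for all n ≥ 0. Then the following are equivalent: (1) there exist positive integers b and C such that D_{bn}^s · C^{n+1} · a_n ∈ ℤ for all n ≥ 0; (2) there exists a positive integer b such that for all sufficiently large primes p and all n ≥ 0 with a_n ≠ 0, one has v_p(a_n) ≥ −s·v_p(D_{bn}). -/

import Mathlib

/-- `D n = lcm {1, 2, …, n}`, with `D 0 = 1`. -/
def D (n : ℕ) : ℕ := (Finset.Icc 1 n).lcm id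

lemma D_pos (n : ℕ) : 0 < D n := by
  rw [Nat.pos_iff_ne_zero, Ne, D, Finset.lcm_eq_zero_iff]
  simp

/-- Characterization of membership in the filtration level `𝒢ₛ` for a sequence of rationals
with geometrically bounded denominators: the existence of positive integers `b`, `C` with
`D (b*n)^s · C^(n+1) · aₙ ∈ ℤ` for all `n` is equivalent to the existence of a positive
integer `b` such that `v_p(aₙ) ≥ −s·v_p(D (b*n))` for all sufficiently large primes `p`
and all `n` with `aₙ ≠ 0`. -/
theorem mem_filtration_iff (s : ℕ) (a : ℕ → ℚ)
    (Δ : ℝ) (hΔ : 1 < Δ) (δ : ℕ → ℕ) (hδpos : ∀ n, 0 < δ n)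
    (hδle : ∀ n, (δ n : ℝ) ≤ Δ ^ (n + 1))
    (hδint : ∀ n, ∃ m : ℤ, (δ n : ℚ) * a n = (m : ℚ)) :
    (∃ b C : ℕ, 0 < b ∧ 0 < C ∧ ∀ n : ℕ, ∃ m : ℤ,
        (D (b * n) : ℚ) ^ s * (C : ℚ) ^ (n + 1) * a n = (m : ℚ)) ↔
    (∃ b : ℕ, 0 < b ∧ ∃ p₀ : ℕ, ∀ p : ℕ, p.Prime → p₀ ≤ p → ∀ n : ℕ, a n ≠ 0 →
        -(s : ℤ) * padicValNat p (D (b * n)) ≤ padicValRat p (a n)) := by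
  constructor
  · rintro ⟨b, C, hb, hC, h⟩
    refine ⟨b, hb, C + 1, ?_⟩
    intro p hp hpC n han
    haveI : Fact p.Prime := ⟨hp⟩
    obtain ⟨m, hm⟩ := h n
    have hD : ((D (b*n) : ℚ)) ≠ 0 := by exact_mod_cast (D_pos _).ne'
    have hC0 : ((C : ℚ)) ≠ 0 := by exact_mod_cast hC.ne'
    have hDs : ((D (b*n) : ℚ))^s ≠ 0 := pow_ne_zero _ hD
    have hCs : ((C : ℚ))^(n+1) ≠ 0 := pow_ne_zero _ hC0
    have key : padicValRat p ((D (b*n) : ℚ)^s * (C:ℚ)^(n+1) * a n)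
        = s * padicValNat p (D (b*n)) + (n+1) * padicValNat p C + padicValRat p (a n) := by
      rw [padicValRat.mul (mul_ne_zero hDs hCs) han, padicValRat.mul hDs hCs,
        padicValRat.pow _, padicValRat.pow _, padicValRat.of_nat, padicValRat.of_nat]
      push_cast
      ring
    have hvC : padicValNat p C = 0 :=
      padicValNat.eq_zero_of_not_dvd (fun hdvd => by have := Nat.le_of_dvd hC hdvd; omega)
    rw [hm, padicValRat.of_int] at key
    have h0 : (0:ℤ) ≤ padicValInt p m := Int.natCast_nonneg _
    rw [hvC] at key
    simp only [Nat.cast_zero, mul_zero, add_zero] at key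
    linarith [key]
  · rintro ⟨b, hb, p₀, h⟩
    obtain ⟨K, hK⟩ := pow_unbounded_of_one_lt Δ (one_lt_two (α := ℝ))
    set C : ℕ := ((p₀+1).factorial)^K with hCdef
    have hCpos : 0 < C := pow_pos (Nat.factorial_pos _) K
    refine ⟨b, C, hb, hCpos, ?_⟩
    intro n
    by_cases han : a n = 0
    · exact ⟨0, by rw [han]; simp⟩
    obtain ⟨m, hm⟩ := hδint n
    have hδ0 : (δ n : ℚ) ≠ 0 := by exact_mod_cast (hδpos n).ne'
    have hm0 : m ≠ 0 := by
      rintro rfl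
      exact han ((mul_eq_zero.mp (by simpa using hm)).resolve_left hδ0)
    have hma : m.natAbs ≠ 0 := Int.natAbs_ne_zero.mpr hm0
    -- key divisibility
    have hdvd : δ n ∣ (D (b*n))^s * C^(n+1) * m.natAbs := by
      rw [← Nat.factorization_le_iff_dvd (hδpos n).ne'
        (Nat.mul_ne_zero (Nat.mul_ne_zero (pow_ne_zero _ (D_pos _).ne') (pow_ne_zero _ hCpos.ne')) hma)]
      intro p
      rcases Nat.eq_zero_or_pos ((δ n).factorization p) with h0 | hppos
      · simp [h0]
      have hp : p.Prime := Nat.prime_of_mem_primeFactors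
        (by rw [← Nat.support_factorization]; exact Finsupp.mem_support_iff.mpr hppos.ne')
      haveI : Fact p.Prime := ⟨hp⟩
      have hDne : (D (b*n))^s ≠ 0 := pow_ne_zero _ (D_pos _).ne'
      have hCne : C^(n+1) ≠ 0 := pow_ne_zero _ hCpos.ne'
      rw [Nat.factorization_mul (Nat.mul_ne_zero hDne hCne) hma,
        Nat.factorization_mul hDne hCne, Nat.factorization_pow, Nat.factorization_pow]
      simp only [Finsupp.coe_add, Finsupp.coe_smul, Pi.add_apply, Pi.smul_apply, smul_eq_mul]
      rcases le_or_gt p₀ p with hple | hplt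
      · -- large prime: use hypothesis
        have hineq := h p hp hple n han
        have hav : a n = (m : ℚ) / (δ n : ℚ) := by
          rw [eq_div_iff hδ0, mul_comm]; exact hm
        rw [hav, padicValRat.div (by exact_mod_cast hm0) hδ0, padicValRat.of_int,
          padicValRat.of_nat] at hineq
        rw [Nat.factorization_def _ hp, Nat.factorization_def _ hp, Nat.factorization_def _ hp,
          Nat.factorization_def _ hp]
        have : (padicValNat p (δ n) : ℤ) ≤ s * padicValNat p (D (b*n)) + padicValInt p m := by
          linarith [hineq]
        have hpvi : padicValInt p m = padicValNat p m.natAbs := rfl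
        rw [hpvi] at this
        omega
      · -- small prime: δ valuation bounded by K*(n+1), C contributes enough
        have hvδ : padicValNat p (δ n) ≤ K * (n+1) := by
          have h1 : p ^ padicValNat p (δ n) ≤ δ n :=
            Nat.le_of_dvd (hδpos n) pow_padicValNat_dvd
          have h2 : (2:ℕ) ^ padicValNat p (δ n) ≤ δ n :=
            le_trans (Nat.pow_le_pow_left hp.two_le _) h1
          have h3 : (2:ℝ) ^ padicValNat p (δ n) ≤ 2 ^ (K * (n+1)) := by
            calc (2:ℝ) ^ padicValNat p (δ n) ≤ (δ n : ℝ) := by exact_mod_cast h2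
              _ ≤ Δ ^ (n+1) := hδle n
              _ ≤ ((2:ℝ)^K) ^ (n+1) := by
                  apply pow_le_pow_left₀ (le_of_lt (lt_trans one_pos hΔ)) hK.le
              _ = 2 ^ (K * (n+1)) := by rw [← pow_mul]
          exact_mod_cast (pow_le_pow_iff_right₀ (by norm_num : (1:ℝ) < 2)).mp h3
        have hCfac : K ≤ C.factorization p := by
          rw [hCdef, Nat.factorization_pow]
          simp only [Finsupp.coe_smul, Pi.smul_apply, smul_eq_mul]
          have hpd : p ∣ (p₀+1).factorial := Nat.dvd_factorial hp.pos (by omega)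
          have : 1 ≤ ((p₀+1).factorial).factorization p :=
            (Nat.Prime.factorization_pos_of_dvd hp (Nat.factorial_ne_zero _) hpd)
          nlinarith
        have hδf : (δ n).factorization p = padicValNat p (δ n) := Nat.factorization_def _ hp
        rw [hδf]
        calc padicValNat p (δ n) ≤ K * (n+1) := hvδ
          _ ≤ (n+1) * C.factorization p := by nlinarith
          _ ≤ _ := by omega
    have hdvdZ : (δ n : ℤ) ∣ (D (b*n) : ℤ)^s * (C:ℤ)^(n+1) * m := by
      rw [Int.natCast_dvd]
      have hnab : ((D (b*n) : ℤ)^s * (C:ℤ)^(n+1) * m).natAbs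
          = (D (b*n))^s * C^(n+1) * m.natAbs := by
        simp [Int.natAbs_mul, Int.natAbs_pow]
      rw [hnab]; exact hdvd
    obtain ⟨q, hq⟩ := hdvdZ
    refine ⟨q, ?_⟩
    apply mul_left_cancel₀ hδ0
    have hqQ : ((D (b*n) : ℚ))^s * (C:ℚ)^(n+1) * (m:ℚ) = (δ n : ℚ) * q := by
      exact_mod_cast congrArg (Int.cast : ℤ → ℚ) hq
    calc (δ n:ℚ) * ((D (b*n):ℚ)^s * (C:ℚ)^(n+1) * a n)
        = (D (b*n):ℚ)^s * (C:ℚ)^(n+1) * ((δ n:ℚ) * a n) := by ring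
      _ = (D (b*n):ℚ)^s * (C:ℚ)^(n+1) * m := by rw [hm]
      _ = (δ n:ℚ) * q := hqQ
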